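/- Let d, k ∈ ℕ, let U = (U₁,…,U_k) be independent random variables each uniformly distributed on [0,1], and let σ be a random map from {1,…,d} to {1,…,k} (equivalently, a d×k categorical random matrix Γ with entries Z_{is} = 1_{σ(i)=s}) independent of U. Define X_i = U_{σ(i)} for i ∈ [d]. Then: (i) each X_i is uniformly distributed on [0,1]; (ii) for all i ≠ j and every admissible function g, Corr(g(X_i), g(X_j)) = P(σ(i) = σ(j)); in particular (X₁,…,X_d) has the invariant correlation matrix R with R_{ij} = P(σ(i) = σ(j)) = (E[ΓΓᵀ])_{ij} for i ≠ j. -/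

import Mathlib

open MeasureTheory ProbabilityTheory

variable {Ω : Type*} [MeasurableSpace Ω]

noncomputable def cov (μ : Measure Ω) (X Y : Ω → ℝ) : ℝ :=
  ∫ ω, (X ω - ∫ a, X a ∂μ) * (Y ω - ∫ a, Y a ∂μ) ∂μ

noncomputable def corr (μ : Measure Ω) (X Y : Ω → ℝ) : ℝ :=
  cov μ X Y / Real.sqrt (variance X μ * variance Y μ)

def Admissible (μ : Measure Ω) (X Y : Ω → ℝ) (g : ℝ → ℝ) : Prop :=
  Measurable g ∧ MemLp (g ∘ X) 2 μ ∧ MemLp (g ∘ Y) 2 μ ∧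
    0 < variance (g ∘ X) μ ∧ 0 < variance (g ∘ Y) μ

def IC (μ : Measure Ω) (X Y : Ω → ℝ) (r : ℝ) : Prop :=
  corr μ X Y = r ∧ ∀ g : ℝ → ℝ, Admissible μ X Y g → corr μ (g ∘ X) (g ∘ Y) = r

private lemma int_mul_of_memL2 {μ : Measure Ω} {A B : Ω → ℝ}
    (hA : MemLp A 2 μ) (hB : MemLp B 2 μ) :
    Integrable (fun ω => A ω * B ω) μ := by
  have h := hB.smul (φ := A) hA (r := 1)
  rw [memLp_one_iff_integrable] at h
  exact h

private lemma cov_eq_sub (μ : Measure Ω) [IsProbabilityMeasure μ] {A B : Ω → ℝ}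
    (hA : MemLp A 2 μ) (hB : MemLp B 2 μ) :
    cov μ A B = (∫ ω, A ω * B ω ∂μ) - (∫ ω, A ω ∂μ) * (∫ ω, B ω ∂μ) := by
  have hAi : Integrable A μ := hA.integrable one_le_two
  have hBi : Integrable B μ := hB.integrable one_le_two
  have hABi : Integrable (fun ω => A ω * B ω) μ := int_mul_of_memL2 hA hB
  have expand : ∀ ω, (A ω - ∫ a, A a ∂μ) * (B ω - ∫ a, B a ∂μ)
      = A ω * B ω - (∫ a, A a ∂μ) * B ω - (∫ a, B a ∂μ) * A ω
        + (∫ a, A a ∂μ) * (∫ a, B a ∂μ) := fun ω => by ring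
  have h1 : Integrable (fun ω => A ω * B ω - (∫ a, A a ∂μ) * B ω) μ :=
    hABi.sub (hBi.const_mul _)
  have h2 : Integrable (fun ω => A ω * B ω - (∫ a, A a ∂μ) * B ω
      - (∫ a, B a ∂μ) * A ω) μ := h1.sub (hAi.const_mul _)
  rw [cov]
  simp_rw [expand]
  rw [integral_add h2 (integrable_const _), integral_sub h1 (hAi.const_mul _),
    integral_sub hABi (hBi.const_mul _),
    integral_const_mul, integral_const_mul, integral_const]
  simp only [measure_univ, probReal_univ, ENNReal.toReal_one, smul_eq_mul, one_mul]
  ring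

private lemma corr_of (μ : Measure Ω) {A B : Ω → ℝ} {p v : ℝ} (hv : 0 < v)
    (hcov : cov μ A B = p * v) (hA : variance A μ = v) (hB : variance B μ = v) :
    corr μ A B = p := by
  rw [corr, hcov, hA, hB, Real.sqrt_mul_self hv.le, mul_div_assoc, div_self hv.ne', mul_one]

/-- Let `U₁,…,U_k` be iid uniform on `[0,1]`, and `σ` a random map
`[d] → [k]` independent of `U`. Set `X_i = U_{σ(i)}`. Then each `X_i` is uniform on `[0,1]`,
and for `i ≠ j`, `(X_i, X_j)` has invariant correlation `P(σ(i) = σ(j))`; in particular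
`(X₁,…,X_d)` has the invariant correlation matrix `E[ΓΓᵀ]`. -/
theorem categorical_mixture_invariant_correlation
    (μ : Measure Ω) [IsProbabilityMeasure μ] (d k : ℕ)
    (U : Fin k → Ω → ℝ) (hUmeas : ∀ s, Measurable (U s))
    (hUunif : ∀ s, Measure.map (U s) μ = MeasureTheory.volume.restrict (Set.Icc (0 : ℝ) 1))
    (hUindep : iIndepFun U μ)
    (σ : Ω → Fin d → Fin k) (hσ : Measurable σ)
    (hindep : IndepFun σ (fun ω s => U s ω) μ)
    (X : Fin d → Ω → ℝ) (hX : ∀ i ω, X i ω = U (σ ω i) ω) :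
    (∀ i, Measure.map (X i) μ = MeasureTheory.volume.restrict (Set.Icc (0 : ℝ) 1)) ∧
      (∀ i j, i ≠ j →
        (∀ g : ℝ → ℝ, Admissible μ (X i) (X j) g →
          corr μ (g ∘ X i) (g ∘ X j) = (μ {ω | σ ω i = σ ω j}).toReal) ∧
        IC μ (X i) (X j) ((μ {ω | σ ω i = σ ω j}).toReal)) := by
  classical
  set ν := MeasureTheory.volume.restrict (Set.Icc (0 : ℝ) 1) with hνdef
  haveI hνprob : IsProbabilityMeasure ν :=
    ⟨by rw [hνdef, Measure.restrict_apply_univ, Real.volume_Icc]; norm_num⟩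
  have hσi : ∀ i, Measurable fun ω => σ ω i := fun i => (measurable_pi_apply i).comp hσ
  have hσiS : ∀ (i : Fin d) (s : Fin k), MeasurableSet {ω | σ ω i = s} := by
    intro i s
    have h := (hσi i) (measurableSet_singleton s)
    exact h
  have hSfib : ∀ (i : Fin d) (s : Fin k),
      MeasurableSet {f : Fin d → Fin k | f i = s} := by
    intro i s
    have h := (measurable_pi_apply (X := fun _ : Fin d => Fin k) i)
      (measurableSet_singleton s)
    exact h
  have hXmeas : ∀ i, Measurable (X i) := by
    intro i
    have hrep : X i = fun ω => ∑ s : Fin k, if σ ω i = s then U s ω else 0 := by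
      funext ω; rw [hX]; simp
    rw [hrep]
    exact Finset.measurable_sum _ fun s _ =>
      Measurable.ite (hσiS i s) (hUmeas s) measurable_const
  -- the law of each `X i`
  have hlaw : ∀ i, Measure.map (X i) μ = ν := by
    intro i
    ext A hA
    rw [Measure.map_apply (hXmeas i) hA]
    have hdecomp : X i ⁻¹' A = ⋃ s : Fin k, ({ω | σ ω i = s} ∩ U s ⁻¹' A) := by
      ext ω
      simp only [Set.mem_preimage, Set.mem_iUnion, Set.mem_inter_iff, Set.mem_setOf_eq]
      constructor
      · intro h; exact ⟨σ ω i, rfl, by rwa [hX] at h⟩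
      · rintro ⟨s, hs, hmem⟩; rw [hX, hs]; exact hmem
    have hdisj : Pairwise (Function.onFun Disjoint
        (fun s : Fin k => {ω | σ ω i = s} ∩ U s ⁻¹' A)) := by
      intro s t hst
      exact Set.disjoint_left.2 fun ω h1 h2 => hst (h1.1.symm.trans h2.1)
    have hmeas' : ∀ s : Fin k, MeasurableSet ({ω | σ ω i = s} ∩ U s ⁻¹' A) :=
      fun s => (hσiS i s).inter ((hUmeas s) hA)
    rw [hdecomp, measure_iUnion hdisj hmeas', tsum_fintype]
    have hterm : ∀ s : Fin k, μ ({ω | σ ω i = s} ∩ U s ⁻¹' A)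
        = μ {ω | σ ω i = s} * ν A := by
      intro s
      have h := hindep.measure_inter_preimage_eq_mul ({f : Fin d → Fin k | f i = s})
        ((fun u : Fin k → ℝ => u s) ⁻¹' A)
        (hSfib i s)
        ((measurable_pi_apply s) hA)
      have h2 : (fun ω s' => U s' ω) ⁻¹' ((fun u : Fin k → ℝ => u s) ⁻¹' A) = U s ⁻¹' A := rfl
      rw [h2] at h
      rw [show {ω | σ ω i = s} = σ ⁻¹' {f : Fin d → Fin k | f i = s} from rfl, h,
        ← hUunif s, Measure.map_apply (hUmeas s) hA]
    simp_rw [hterm]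
    rw [← Finset.sum_mul]
    have huniv : (⋃ s : Fin k, {ω | σ ω i = s}) = Set.univ := by
      ext ω; simp
    have hsum1 : ∑ s : Fin k, μ {ω | σ ω i = s} = 1 := by
      rw [← tsum_fintype (L := .unconditional _), ← measure_iUnion
        (fun s t hst => Set.disjoint_left.2 fun ω h1 h2 => hst (h1.symm.trans h2))
        (fun s => hσiS i s), huniv, measure_univ]
    rw [hsum1, one_mul]
  -- the key covariance computation
  have key : ∀ (i j : Fin d) (g : ℝ → ℝ), Measurable g →
      MemLp (g ∘ X i) 2 μ → MemLp (g ∘ X j) 2 μ →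
      cov μ (g ∘ X i) (g ∘ X j)
        = (μ {ω | σ ω i = σ ω j}).toReal * variance (g ∘ X i) μ
      ∧ variance (g ∘ X j) μ = variance (g ∘ X i) μ := by
    intro i j g hg hgi hgj
    set m := ∫ x, g x ∂ν with hm
    set M2 := ∫ x, g x * g x ∂ν with hM2
    have hint1 : ∀ l : Fin d, ∫ ω, g (X l ω) ∂μ = m := by
      intro l
      rw [hm, ← hlaw l, integral_map (hXmeas l).aemeasurable hg.aestronglyMeasurable]
    have hint2 : ∀ l : Fin d, ∫ ω, g (X l ω) * g (X l ω) ∂μ = M2 := by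
      intro l
      rw [hM2, ← hlaw l, integral_map (f := fun x => g x * g x) (hXmeas l).aemeasurable
        ((hg.mul hg).aestronglyMeasurable)]
    have hgν : MemLp g 2 ν := by
      rw [← hlaw i]
      exact (memLp_map_measure_iff hg.aestronglyMeasurable (hXmeas i).aemeasurable).2 hgi
    have hgU : ∀ s, MemLp (fun ω => g (U s ω)) 2 μ := by
      intro s
      exact (memLp_map_measure_iff hg.aestronglyMeasurable (hUmeas s).aemeasurable).1
        (by rw [hUunif s]; exact hgν)
    have hgUint : ∀ s, Integrable (fun ω => g (U s ω)) μ :=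
      fun s => (hgU s).integrable one_le_two
    have hgUm : ∀ s, ∫ ω, g (U s ω) ∂μ = m := by
      intro s
      rw [hm, ← hUunif s, integral_map (hUmeas s).aemeasurable hg.aestronglyMeasurable]
    have hgU2 : ∀ s, ∫ ω, g (U s ω) * g (U s ω) ∂μ = M2 := by
      intro s
      rw [hM2, ← hUunif s, integral_map (f := fun x => g x * g x) (hUmeas s).aemeasurable
        ((hg.mul hg).aestronglyMeasurable)]
    have hmulint : ∀ s t, Integrable (fun ω => g (U s ω) * g (U t ω)) μ :=
      fun s t => int_mul_of_memL2 (hgU s) (hgU t)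
    have hprod : ∀ s t, ∫ ω, g (U s ω) * g (U t ω) ∂μ = if s = t then M2 else m * m := by
      intro s t
      by_cases hst : s = t
      · subst hst; rw [if_pos rfl]; exact hgU2 s
      · rw [if_neg hst]
        have hind : IndepFun (fun ω => g (U s ω)) (fun ω => g (U t ω)) μ :=
          (hUindep.indepFun hst).comp hg hg
        have := hind.integral_mul_eq_mul_integral (hgUint s).aestronglyMeasurable (hgUint t).aestronglyMeasurable
        simp only [Pi.mul_apply] at this
        rw [show (fun ω => g (U s ω) * g (U t ω))
            = (fun ω => g (U s ω)) * (fun ω => g (U t ω)) from rfl]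
        exact this.trans (by rw [hgUm s, hgUm t])
    set E : Fin k × Fin k → Set Ω := fun p => {ω | σ ω i = p.1 ∧ σ ω j = p.2} with hE
    have hEm : ∀ p, MeasurableSet (E p) := by
      intro p
      have h := (hσiS i p.1).inter (hσiS j p.2)
      exact h
    have hEdisj : Pairwise (Function.onFun Disjoint E) := by
      intro p q hpq
      refine Set.disjoint_left.2 fun ω h1 h2 => hpq ?_
      exact Prod.ext_iff.2 ⟨h1.1.symm.trans h2.1, h1.2.symm.trans h2.2⟩
    have hprodint : Integrable (fun ω => g (X i ω) * g (X j ω)) μ :=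
      int_mul_of_memL2 hgi hgj
    have hsplit : ∫ ω, g (X i ω) * g (X j ω) ∂μ
        = ∑ p : Fin k × Fin k, ∫ ω in E p, g (X i ω) * g (X j ω) ∂μ := by
      have hfun : (fun ω => g (X i ω) * g (X j ω))
          = fun ω => ∑ p : Fin k × Fin k,
              (E p).indicator (fun ω' => g (X i ω') * g (X j ω')) ω := by
        funext ω
        rw [Finset.sum_eq_single (σ ω i, σ ω j)]
        · have hmem : ω ∈ E (σ ω i, σ ω j) := ⟨rfl, rfl⟩
          rw [Set.indicator_of_mem hmem]
        · rintro ⟨s, t⟩ - hp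
          have hnmem : ω ∉ E (s, t) := by
            rintro ⟨h1, h2⟩
            exact hp (by rw [h1, h2])
          rw [Set.indicator_of_notMem hnmem]
        · intro h; exact absurd (Finset.mem_univ _) h
      conv_lhs => rw [hfun]
      rw [integral_finset_sum _ (fun p _ => hprodint.indicator (hEm p))]
      exact Finset.sum_congr rfl fun p _ => integral_indicator (hEm p)
    have hset : ∀ p : Fin k × Fin k, ∫ ω in E p, g (X i ω) * g (X j ω) ∂μ
        = (μ (E p)).toReal * (if p.1 = p.2 then M2 else m * m) := by
      rintro ⟨s, t⟩
      have hcongr : ∫ ω in E (s, t), g (X i ω) * g (X j ω) ∂μ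
          = ∫ ω in E (s, t), g (U s ω) * g (U t ω) ∂μ := by
        refine setIntegral_congr_fun (hEm _) ?_
        rintro ω ⟨h1, h2⟩
        show g (X i ω) * g (X j ω) = g (U s ω) * g (U t ω)
        rw [hX, hX, h1, h2]
      rw [hcongr]
      have hind_eq : (fun ω => if σ ω i = s ∧ σ ω j = t then (1 : ℝ) else 0)
          = (E (s, t)).indicator (fun _ => (1 : ℝ)) := by
        funext ω
        by_cases h : σ ω i = s ∧ σ ω j = t
        · have hmem : ω ∈ E (s, t) := h
          rw [if_pos h, Set.indicator_of_mem hmem]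
        · have hnmem : ω ∉ E (s, t) := h
          rw [if_neg h, Set.indicator_of_notMem hnmem]
      have hφ : Measurable (fun f : Fin d → Fin k => if f i = s ∧ f j = t then (1 : ℝ) else 0) :=
        measurable_of_countable _
      have hψ : Measurable (fun u : Fin k → ℝ => g (u s) * g (u t)) :=
        (hg.comp (measurable_pi_apply s)).mul (hg.comp (measurable_pi_apply t))
      have hIndep2 : IndepFun (fun ω => if σ ω i = s ∧ σ ω j = t then (1 : ℝ) else 0)
          (fun ω => g (U s ω) * g (U t ω)) μ := hindep.comp hφ hψ
      have hindint : Integrable (fun ω => if σ ω i = s ∧ σ ω j = t then (1 : ℝ) else 0) μ := by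
        rw [hind_eq]; exact (integrable_const 1).indicator (hEm _)
      have hmuleq : ∫ ω in E (s, t), g (U s ω) * g (U t ω) ∂μ
          = ∫ ω, (if σ ω i = s ∧ σ ω j = t then (1 : ℝ) else 0)
              * (g (U s ω) * g (U t ω)) ∂μ := by
        rw [← integral_indicator (hEm _)]
        congr 1
        funext ω
        by_cases h : σ ω i = s ∧ σ ω j = t
        · have hmem : ω ∈ E (s, t) := h
          rw [Set.indicator_of_mem hmem, if_pos h, one_mul]
        · have hnmem : ω ∉ E (s, t) := h
          rw [Set.indicator_of_notMem hnmem, if_neg h, zero_mul]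
      have hmul := hIndep2.integral_mul_eq_mul_integral hindint.aestronglyMeasurable (hmulint s t).aestronglyMeasurable
      simp only [Pi.mul_apply] at hmul
      rw [hmuleq, show (fun ω => (if σ ω i = s ∧ σ ω j = t then (1 : ℝ) else 0)
          * (g (U s ω) * g (U t ω)))
          = (fun ω => if σ ω i = s ∧ σ ω j = t then (1 : ℝ) else 0)
            * (fun ω => g (U s ω) * g (U t ω)) from rfl]
      refine hmul.trans ?_
      congr 1
      · rw [hind_eq, integral_indicator_const _ (hEm _)]
        simp [measureReal_def]
      · exact hprod s t
    have hP : (μ {ω | σ ω i = σ ω j}).toReal = ∑ s : Fin k, (μ (E (s, s))).toReal := by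
      have hset_eq : {ω | σ ω i = σ ω j} = ⋃ s : Fin k, E (s, s) := by
        ext ω
        simp only [Set.mem_setOf_eq, Set.mem_iUnion, hE]
        constructor
        · intro h; exact ⟨σ ω i, rfl, h.symm⟩
        · rintro ⟨s, h1, h2⟩; rw [h1, h2]
      rw [hset_eq, measure_iUnion (fun s t hst => Set.disjoint_left.2
          fun ω h1 h2 => hst (h1.1.symm.trans h2.1)) (fun s => hEm (s, s)),
        tsum_fintype, ENNReal.toReal_sum (fun s _ => measure_ne_top μ _)]
    have htotal : ∑ p : Fin k × Fin k, (μ (E p)).toReal = 1 := by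
      have huniv : (⋃ p : Fin k × Fin k, E p) = Set.univ := by
        ext ω
        simp only [Set.mem_iUnion, Set.mem_univ, iff_true, hE]
        exact ⟨(σ ω i, σ ω j), rfl, rfl⟩
      have h1 : ∑ p : Fin k × Fin k, μ (E p) = 1 := by
        rw [← tsum_fintype (L := .unconditional _), ← measure_iUnion hEdisj hEm, huniv, measure_univ]
      rw [← ENNReal.toReal_sum (fun p _ => measure_ne_top μ _), h1, ENNReal.toReal_one]
    have hvar : ∀ l : Fin d, MemLp (g ∘ X l) 2 μ → variance (g ∘ X l) μ = M2 - m * m := by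
      intro l hl
      rw [variance_eq_sub hl]
      have ha : ∫ ω, (g ∘ X l) ω ∂μ = m := hint1 l
      have hb : ∫ ω, ((g ∘ X l) ^ 2) ω ∂μ = M2 := by
        simp only [Pi.pow_apply, Function.comp_apply, sq]
        exact hint2 l
      rw [ha, hb]
      ring
    constructor
    · rw [cov_eq_sub μ hgi hgj]
      have h1 : (∫ ω, (g ∘ X i) ω * (g ∘ X j) ω ∂μ)
          = ∑ p : Fin k × Fin k, (μ (E p)).toReal * (if p.1 = p.2 then M2 else m * m) := by
        rw [show (fun ω => (g ∘ X i) ω * (g ∘ X j) ω)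
            = fun ω => g (X i ω) * g (X j ω) from rfl]
        rw [hsplit]
        exact Finset.sum_congr rfl fun p _ => hset p
      have h2 : (∫ ω, (g ∘ X i) ω ∂μ) = m := hint1 i
      have h3 : (∫ ω, (g ∘ X j) ω ∂μ) = m := hint1 j
      rw [h1, h2, h3, hvar i hgi, hP]
      have hterm : ∀ p : Fin k × Fin k, (μ (E p)).toReal * (if p.1 = p.2 then M2 else m * m)
          = (if p.1 = p.2 then (μ (E p)).toReal * (M2 - m * m) else 0)
            + (μ (E p)).toReal * (m * m) := by
        intro p
        by_cases h : p.1 = p.2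
        · rw [if_pos h, if_pos h]; ring
        · rw [if_neg h, if_neg h]; ring
      have hsum_split : ∑ p : Fin k × Fin k, (μ (E p)).toReal * (if p.1 = p.2 then M2 else m * m)
          = (∑ s : Fin k, (μ (E (s, s))).toReal) * (M2 - m * m)
            + (∑ p : Fin k × Fin k, (μ (E p)).toReal) * (m * m) := by
        calc ∑ p : Fin k × Fin k, (μ (E p)).toReal * (if p.1 = p.2 then M2 else m * m)
            = ∑ p : Fin k × Fin k, ((if p.1 = p.2 then (μ (E p)).toReal * (M2 - m * m) else 0)
                + (μ (E p)).toReal * (m * m)) := Finset.sum_congr rfl fun p _ => hterm p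
          _ = (∑ p : Fin k × Fin k, if p.1 = p.2 then (μ (E p)).toReal * (M2 - m * m) else 0)
                + ∑ p : Fin k × Fin k, (μ (E p)).toReal * (m * m) := Finset.sum_add_distrib
          _ = (∑ s : Fin k, (μ (E (s, s))).toReal * (M2 - m * m))
                + ∑ p : Fin k × Fin k, (μ (E p)).toReal * (m * m) := by
              congr 1
              rw [Fintype.sum_prod_type]
              refine Finset.sum_congr rfl fun s _ => ?_
              rw [Finset.sum_ite_eq]
              simp
          _ = (∑ s : Fin k, (μ (E (s, s))).toReal) * (M2 - m * m)
                + (∑ p : Fin k × Fin k, (μ (E p)).toReal) * (m * m) := by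
              rw [Finset.sum_mul, Finset.sum_mul]
      rw [hsum_split, htotal]
      ring
    · rw [hvar i hgi, hvar j hgj]
  -- assemble
  refine ⟨hlaw, fun i j _hij => ?_⟩
  have hadm : ∀ g : ℝ → ℝ, Admissible μ (X i) (X j) g →
      corr μ (g ∘ X i) (g ∘ X j) = (μ {ω | σ ω i = σ ω j}).toReal := by
    intro g hgadm
    obtain ⟨hg, hgi, hgj, hvi, _hvj⟩ := hgadm
    obtain ⟨hcov, hvarji⟩ := key i j g hg hgi hgj
    exact corr_of μ hvi hcov rfl hvarji
  have hidν : MemLp (id : ℝ → ℝ) 2 ν := by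
    refine MemLp.of_bound aestronglyMeasurable_id 1 ?_
    rw [hνdef]
    refine (ae_restrict_iff' measurableSet_Icc).2 (Filter.Eventually.of_forall fun x hx => ?_)
    rw [id_eq, Real.norm_eq_abs, abs_le]
    exact ⟨by linarith [hx.1], hx.2⟩
  have hidL2 : ∀ l, MemLp (X l) 2 μ := by
    intro l
    have h := (memLp_map_measure_iff aestronglyMeasurable_id (hXmeas l).aemeasurable).1
      (by rw [hlaw l]; exact hidν)
    simpa [Function.id_comp] using h
  have hmean : (∫ x, (id : ℝ → ℝ) x ∂ν) = 1 / 2 := by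
    rw [hνdef]
    have : (∫ x in Set.Icc (0 : ℝ) 1, x) = 1 / 2 := by
      rw [MeasureTheory.integral_Icc_eq_integral_Ioc,
        ← intervalIntegral.integral_of_le (zero_le_one), integral_id]
      norm_num
    simpa using this
  have hsq : (∫ x, (id : ℝ → ℝ) x * (id : ℝ → ℝ) x ∂ν) = 1 / 3 := by
    rw [hνdef]
    have : (∫ x in Set.Icc (0 : ℝ) 1, x ^ 2) = 1 / 3 := by
      rw [MeasureTheory.integral_Icc_eq_integral_Ioc,
        ← intervalIntegral.integral_of_le (zero_le_one), integral_pow]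
      norm_num
    have h2 : (∫ x in Set.Icc (0 : ℝ) 1, x * x) = ∫ x in Set.Icc (0 : ℝ) 1, x ^ 2 := by
      refine integral_congr_ae (Filter.Eventually.of_forall fun x => ?_)
      show x * x = x ^ 2
      rw [sq]
    exact h2.trans this
  have hvarX : ∀ l : Fin d, variance (X l) μ = 1 / 12 := by
    intro l
    have hl2 : MemLp ((id : ℝ → ℝ) ∘ X l) 2 μ := by
      simpa [Function.id_comp] using hidL2 l
    rw [show X l = (id : ℝ → ℝ) ∘ X l from rfl, variance_eq_sub hl2]
    have ha : ∫ ω, ((id : ℝ → ℝ) ∘ X l) ω ∂μ = 1 / 2 := by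
      rw [← hmean, ← hlaw l,
        integral_map (hXmeas l).aemeasurable aestronglyMeasurable_id]
      rfl
    have hb : ∫ ω, (((id : ℝ → ℝ) ∘ X l) ^ 2) ω ∂μ = 1 / 3 := by
      rw [← hsq, ← hlaw l, integral_map (f := fun x => (id : ℝ → ℝ) x * (id : ℝ → ℝ) x) (hXmeas l).aemeasurable
        ((measurable_id.mul measurable_id).aestronglyMeasurable)]
      simp only [Pi.pow_apply, Function.comp_apply, id_eq, sq]
    rw [ha, hb]
    norm_num
  have hcorr_id : corr μ (X i) (X j) = (μ {ω | σ ω i = σ ω j}).toReal := by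
    have hgi : MemLp ((id : ℝ → ℝ) ∘ X i) 2 μ := by simpa [Function.id_comp] using hidL2 i
    have hgj : MemLp ((id : ℝ → ℝ) ∘ X j) 2 μ := by simpa [Function.id_comp] using hidL2 j
    obtain ⟨hcov, _⟩ := key i j id measurable_id hgi hgj
    have hcov' : cov μ (X i) (X j) = (μ {ω | σ ω i = σ ω j}).toReal * (1 / 12) := by
      rw [show X i = (id : ℝ → ℝ) ∘ X i from rfl, show X j = (id : ℝ → ℝ) ∘ X j from rfl,
        hcov]
      congr 1
      rw [show (id : ℝ → ℝ) ∘ X i = X i from rfl, hvarX i]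
    refine corr_of μ (by norm_num : (0:ℝ) < 1 / 12) hcov' (hvarX i) (hvarX j)
  exact ⟨hadm, hcorr_id, hadm⟩
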